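/- Let 𝕜 be a field, A, B, C vector spaces over 𝕜, and v ∈ A ⊗ B ⊗ C. Then: (i) dim U_{AB}(v) ≤ dim U_A(v) · dim U_B(v); and (ii) dim U_A(v) ≤ dim U_{AB}(v) · dim U_B(v). (These are the necessary compatibility conditions, r_α ≤ ∏_{β∈S(α)} r_β and r_δ ≤ r_α ∏_{β∈S(α), β≠δ} r_β, satisfied by the tree-based rank of any tensor at a node α with sons A and B.) -/

import Mathlib

open scoped TensorProduct

section
variable (𝕜 : Type*) [Field 𝕜]

/-- The contraction `id_V ⊗ φ : V ⊗ W → V`, sending `x ⊗ y` to `φ(y) • x`. -/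
noncomputable def rContract (V W : Type*) [AddCommGroup V] [Module 𝕜 V]
    [AddCommGroup W] [Module 𝕜 W] (φ : W →ₗ[𝕜] 𝕜) : V ⊗[𝕜] W →ₗ[𝕜] V :=
  (TensorProduct.rid 𝕜 V).toLinearMap ∘ₗ TensorProduct.map LinearMap.id φ

/-- The contraction `ψ ⊗ id_W : V ⊗ W → W`, sending `x ⊗ y` to `ψ(x) • y`. -/
noncomputable def lContract (V W : Type*) [AddCommGroup V] [Module 𝕜 V]
    [AddCommGroup W] [Module 𝕜 W] (ψ : V →ₗ[𝕜] 𝕜) : V ⊗[𝕜] W →ₗ[𝕜] W :=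
  (TensorProduct.lid 𝕜 W).toLinearMap ∘ₗ TensorProduct.map ψ LinearMap.id

/-- The left minimal subspace `U_V(v)` of `v ∈ V ⊗ W`: the span of all contractions
`(id_V ⊗ φ)(v)` with `φ` in the algebraic dual of `W`. -/
noncomputable def leftMin (V W : Type*) [AddCommGroup V] [Module 𝕜 V]
    [AddCommGroup W] [Module 𝕜 W] (v : V ⊗[𝕜] W) : Submodule 𝕜 V :=
  Submodule.span 𝕜 {x | ∃ φ : W →ₗ[𝕜] 𝕜, rContract 𝕜 V W φ v = x}

/-- The right minimal subspace `U_W(v)` of `v ∈ V ⊗ W`: the span of all contractions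
`(ψ ⊗ id_W)(v)` with `ψ` in the algebraic dual of `V`. -/
noncomputable def rightMin (V W : Type*) [AddCommGroup V] [Module 𝕜 V]
    [AddCommGroup W] [Module 𝕜 W] (v : V ⊗[𝕜] W) : Submodule 𝕜 W :=
  Submodule.span 𝕜 {y | ∃ ψ : V →ₗ[𝕜] 𝕜, lContract 𝕜 V W ψ v = y}

end

section Aux

variable {𝕜 : Type*} [Field 𝕜] {V W : Type*} [AddCommGroup V] [Module 𝕜 V]
  [AddCommGroup W] [Module 𝕜 W]

@[simp] lemma rContract_tmul (φ : W →ₗ[𝕜] 𝕜) (x : V) (y : W) :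
    rContract 𝕜 V W φ (x ⊗ₜ y) = φ y • x := by
  simp [rContract]

@[simp] lemma lContract_tmul (ψ : V →ₗ[𝕜] 𝕜) (x : V) (y : W) :
    lContract 𝕜 V W ψ (x ⊗ₜ y) = ψ x • y := by
  simp [lContract]

lemma rContract_map_right {W' : Type*} [AddCommGroup W'] [Module 𝕜 W'] (g : W' →ₗ[𝕜] W)
    (φ : W →ₗ[𝕜] 𝕜) (u : V ⊗[𝕜] W') :
    rContract 𝕜 V W φ (TensorProduct.map LinearMap.id g u) = rContract 𝕜 V W' (φ ∘ₗ g) u := by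
  induction u using TensorProduct.induction_on with
  | zero => simp
  | tmul x y => simp
  | add u₁ u₂ h1 h2 => simp only [map_add, h1, h2]

lemma lContract_map_left {V' : Type*} [AddCommGroup V'] [Module 𝕜 V'] (f : V' →ₗ[𝕜] V)
    (ψ : V →ₗ[𝕜] 𝕜) (u : V' ⊗[𝕜] W) :
    lContract 𝕜 V W ψ (TensorProduct.map f LinearMap.id u) = lContract 𝕜 V' W (ψ ∘ₗ f) u := by
  induction u using TensorProduct.induction_on with
  | zero => simp
  | tmul x y => simp
  | add u₁ u₂ h1 h2 => simp only [map_add, h1, h2]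

lemma rContract_add_dual (φ φ' : W →ₗ[𝕜] 𝕜) (v : V ⊗[𝕜] W) :
    rContract 𝕜 V W (φ + φ') v = rContract 𝕜 V W φ v + rContract 𝕜 V W φ' v := by
  induction v using TensorProduct.induction_on with
  | zero => simp
  | tmul x y => simp [add_smul]
  | add u w hu hw => simp only [map_add, hu, hw]; abel

lemma rContract_smul_dual (k : 𝕜) (φ : W →ₗ[𝕜] 𝕜) (v : V ⊗[𝕜] W) :
    rContract 𝕜 V W (k • φ) v = k • rContract 𝕜 V W φ v := by
  induction v using TensorProduct.induction_on with
  | zero => simp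
  | tmul x y => simp [smul_smul]
  | add u w hu hw => simp only [map_add, hu, hw, smul_add]

/-- `φ ↦ rContract φ v`, bundled as a linear map on the dual. -/
noncomputable def rContractFlip (v : V ⊗[𝕜] W) : Module.Dual 𝕜 W →ₗ[𝕜] V where
  toFun φ := rContract 𝕜 V W φ v
  map_add' φ φ' := rContract_add_dual φ φ' v
  map_smul' k φ := rContract_smul_dual k φ v

@[simp] lemma rContractFlip_apply (v : V ⊗[𝕜] W) (φ : Module.Dual 𝕜 W) :
    rContractFlip v φ = rContract 𝕜 V W φ v := rfl

lemma leftMin_eq_range (v : V ⊗[𝕜] W) :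
    leftMin 𝕜 V W v = LinearMap.range (rContractFlip v) := by
  apply le_antisymm
  · rw [leftMin, Submodule.span_le]
    rintro x ⟨φ, rfl⟩
    exact ⟨φ, rfl⟩
  · rintro x ⟨φ, rfl⟩
    exact Submodule.subset_span ⟨φ, rfl⟩

lemma finiteDimensional_leftMin (v : V ⊗[𝕜] W) : FiniteDimensional 𝕜 (leftMin 𝕜 V W v) := by
  classical
  obtain ⟨S, rfl⟩ := TensorProduct.exists_finset v
  have hle : leftMin 𝕜 V W (∑ p ∈ S, p.1 ⊗ₜ[𝕜] p.2)
      ≤ Submodule.span 𝕜 ((S.image Prod.fst : Finset V) : Set V) := by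
    rw [leftMin, Submodule.span_le]
    rintro x ⟨φ, rfl⟩
    rw [map_sum]
    refine Submodule.sum_mem _ fun p hp => ?_
    rw [rContract_tmul]
    exact Submodule.smul_mem _ _
      (Submodule.subset_span (by exact_mod_cast Finset.mem_image_of_mem Prod.fst hp))
  exact Submodule.finiteDimensional_of_le hle

lemma rContract_comm (φ : W →ₗ[𝕜] 𝕜) (v : V ⊗[𝕜] W) :
    rContract 𝕜 V W φ v = lContract 𝕜 W V φ (TensorProduct.comm 𝕜 V W v) := by
  induction v using TensorProduct.induction_on with
  | zero => simp
  | tmul x y => simp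
  | add u w hu hw => simp only [map_add, hu, hw]

lemma lContract_comm (ψ : V →ₗ[𝕜] 𝕜) (v : V ⊗[𝕜] W) :
    lContract 𝕜 V W ψ v = rContract 𝕜 W V ψ (TensorProduct.comm 𝕜 V W v) := by
  induction v using TensorProduct.induction_on with
  | zero => simp
  | tmul x y => simp
  | add u w hu hw => simp only [map_add, hu, hw]

lemma leftMin_comm (v : V ⊗[𝕜] W) :
    leftMin 𝕜 V W v = rightMin 𝕜 W V (TensorProduct.comm 𝕜 V W v) := by
  rw [leftMin, rightMin]
  congr 1
  ext x
  constructor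
  · rintro ⟨φ, rfl⟩; exact ⟨φ, (rContract_comm φ v).symm⟩
  · rintro ⟨φ, rfl⟩; exact ⟨φ, rContract_comm φ v⟩

lemma rightMin_comm (v : V ⊗[𝕜] W) :
    rightMin 𝕜 V W v = leftMin 𝕜 W V (TensorProduct.comm 𝕜 V W v) := by
  rw [leftMin, rightMin]
  congr 1
  ext x
  constructor
  · rintro ⟨ψ, rfl⟩; exact ⟨ψ, (lContract_comm ψ v).symm⟩
  · rintro ⟨ψ, rfl⟩; exact ⟨ψ, lContract_comm ψ v⟩

lemma finiteDimensional_rightMin (v : V ⊗[𝕜] W) : FiniteDimensional 𝕜 (rightMin 𝕜 V W v) := by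
  rw [rightMin_comm]
  exact finiteDimensional_leftMin _

/-- Decomposition of a tensor along a basis of the left factor, with coefficients that are
contractions of the tensor. -/
lemma tensor_decomp {ι : Type*} (b : Module.Basis ι 𝕜 V) (v : V ⊗[𝕜] W) :
    ∃ f : ι →₀ W, v = f.sum (fun i y => b i ⊗ₜ[𝕜] y) ∧
      ∀ i, ∃ ψ : V →ₗ[𝕜] 𝕜, lContract 𝕜 V W ψ v = f i := by
  classical
  let e : V ⊗[𝕜] W ≃ₗ[𝕜] (ι →₀ W) :=
    (TensorProduct.congr b.repr (LinearEquiv.refl 𝕜 W)).trans (TensorProduct.finsuppScalarLeft 𝕜 W ι)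
  refine ⟨e v, ?_, fun i => ⟨b.coord i, ?_⟩⟩
  · have hF : ∀ u : V ⊗[𝕜] W,
        (Finsupp.lsum 𝕜 fun i => TensorProduct.mk 𝕜 V W (b i)) (e u) = u := by
      intro u
      induction u using TensorProduct.induction_on with
      | zero => simp
      | tmul x y =>
        simp only [e, LinearEquiv.trans_apply, TensorProduct.congr_tmul, LinearEquiv.refl_apply,
          TensorProduct.finsuppScalarLeft_apply_tmul]
        rw [map_finsuppSum]
        simp only [Finsupp.lsum_single, TensorProduct.mk_apply, TensorProduct.tmul_smul,
          TensorProduct.smul_tmul']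
        rw [Finsupp.sum, ← TensorProduct.sum_tmul]
        congr 1
        have := b.linearCombination_repr x
        rwa [Finsupp.linearCombination_apply, Finsupp.sum] at this
      | add u₁ u₂ h1 h2 => simp only [map_add, h1, h2]
    conv_lhs => rw [← hF v]
    rw [Finsupp.lsum_apply]
    rfl
  · induction v using TensorProduct.induction_on with
    | zero => simp
    | tmul x y =>
      simp [e, TensorProduct.finsuppScalarLeft_apply_tmul_apply, Module.Basis.coord_apply]
    | add u₁ u₂ h1 h2 =>
      simp only [map_add, Finsupp.add_apply, h1, h2]

lemma mem_range_map_rightMin (v : V ⊗[𝕜] W) :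
    v ∈ LinearMap.range
      (TensorProduct.map (LinearMap.id : V →ₗ[𝕜] V) (rightMin 𝕜 V W v).subtype) := by
  obtain ⟨f, hv, hf⟩ := tensor_decomp (Module.Basis.ofVectorSpace 𝕜 V) v
  have hm : ∀ i, f i ∈ rightMin 𝕜 V W v := by
    intro i
    obtain ⟨ψ, h⟩ := hf i
    exact h ▸ Submodule.subset_span ⟨ψ, rfl⟩
  set S := rightMin 𝕜 V W v with hS
  clear_value S
  rw [hv, Finsupp.sum]
  refine Submodule.sum_mem _ fun i _ => ?_
  exact ⟨Module.Basis.ofVectorSpace 𝕜 V i ⊗ₜ (⟨f i, hm i⟩ : S), by simp⟩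

lemma range_map_id_subtype_mono {S T : Submodule 𝕜 W} (h : S ≤ T) :
    LinearMap.range (TensorProduct.map (LinearMap.id : V →ₗ[𝕜] V) S.subtype) ≤
      LinearMap.range (TensorProduct.map (LinearMap.id : V →ₗ[𝕜] V) T.subtype) := by
  have key : TensorProduct.map (LinearMap.id : V →ₗ[𝕜] V) S.subtype
      = (TensorProduct.map LinearMap.id T.subtype).comp
          (TensorProduct.map LinearMap.id (Submodule.inclusion h)) := by
    rw [← TensorProduct.map_comp, LinearMap.id_comp, Submodule.subtype_comp_inclusion]
  rw [key]
  exact LinearMap.range_comp_le_range _ _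

lemma range_map_subtype_id_mono {S T : Submodule 𝕜 V} (h : S ≤ T) :
    LinearMap.range (TensorProduct.map S.subtype (LinearMap.id : W →ₗ[𝕜] W)) ≤
      LinearMap.range (TensorProduct.map T.subtype (LinearMap.id : W →ₗ[𝕜] W)) := by
  have key : TensorProduct.map S.subtype (LinearMap.id : W →ₗ[𝕜] W)
      = (TensorProduct.map T.subtype LinearMap.id).comp
          (TensorProduct.map (Submodule.inclusion h) LinearMap.id) := by
    rw [← TensorProduct.map_comp, LinearMap.id_comp, Submodule.subtype_comp_inclusion]
  rw [key]
  exact LinearMap.range_comp_le_range _ _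

lemma mem_range_map_leftMin (v : V ⊗[𝕜] W) :
    v ∈ LinearMap.range
      (TensorProduct.map (leftMin 𝕜 V W v).subtype (LinearMap.id : W →ₗ[𝕜] W)) := by
  have h := mem_range_map_rightMin (TensorProduct.comm 𝕜 V W v)
  rw [← leftMin_comm] at h
  obtain ⟨u, hu⟩ := h
  refine ⟨TensorProduct.comm 𝕜 W (leftMin 𝕜 V W v) u, ?_⟩
  have key : ∀ t : W ⊗[𝕜] (leftMin 𝕜 V W v),
      TensorProduct.map (leftMin 𝕜 V W v).subtype LinearMap.id
          (TensorProduct.comm 𝕜 W (leftMin 𝕜 V W v) t)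
        = (TensorProduct.comm 𝕜 V W).symm
            (TensorProduct.map LinearMap.id (leftMin 𝕜 V W v).subtype t) := by
    intro t
    induction t using TensorProduct.induction_on with
    | zero => simp
    | tmul y s => simp
    | add a c ha hc => simp only [map_add, ha, hc]
  rw [key u, hu]
  simp

lemma finrank_leftMin_le_of_mem_range {S : Submodule 𝕜 W} [FiniteDimensional 𝕜 S]
    {v : V ⊗[𝕜] W}
    (h : v ∈ LinearMap.range (TensorProduct.map (LinearMap.id : V →ₗ[𝕜] V) S.subtype)) :
    Module.finrank 𝕜 (leftMin 𝕜 V W v) ≤ Module.finrank 𝕜 S := by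
  obtain ⟨u, rfl⟩ := h
  have h1 : leftMin 𝕜 V W (TensorProduct.map LinearMap.id S.subtype u) ≤ leftMin 𝕜 V S u := by
    rw [leftMin, Submodule.span_le]
    rintro x ⟨φ, rfl⟩
    rw [rContract_map_right]
    exact Submodule.subset_span ⟨_, rfl⟩
  haveI := finiteDimensional_leftMin (𝕜 := 𝕜) u
  calc Module.finrank 𝕜 (leftMin 𝕜 V W (TensorProduct.map LinearMap.id S.subtype u))
      ≤ Module.finrank 𝕜 (leftMin 𝕜 V S u) := Submodule.finrank_mono h1
    _ = Module.finrank 𝕜 (LinearMap.range (rContractFlip u)) := by rw [leftMin_eq_range]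
    _ ≤ Module.finrank 𝕜 (Module.Dual 𝕜 S) := LinearMap.finrank_range_le _
    _ = Module.finrank 𝕜 S := Subspace.dual_finrank_eq

lemma finrank_iSup_fin_le {n : ℕ} (p : Fin n → Submodule 𝕜 V)
    [inst : ∀ i, FiniteDimensional 𝕜 (p i)] :
    Module.finrank 𝕜 ↥(⨆ i, p i) ≤ ∑ i, Module.finrank 𝕜 (p i) := by
  induction n with
  | zero => simp [iSup_of_empty]
  | succ n ih =>
    have hsplit : (⨆ i : Fin (n + 1), p i) = p 0 ⊔ ⨆ i : Fin n, p i.succ := by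
      apply le_antisymm
      · exact iSup_le fun i => by
          induction i using Fin.cases with
          | zero => exact le_sup_left
          | succ j => exact le_sup_of_le_right (le_iSup (fun k : Fin n => p k.succ) j)
      · exact sup_le (le_iSup p 0) (iSup_le fun j => le_iSup p j.succ)
    rw [hsplit, Fin.sum_univ_succ]
    haveI : FiniteDimensional 𝕜 ↥(⨆ i : Fin n, p i.succ) := inferInstance
    have h1 := Submodule.finrank_sup_add_finrank_inf_eq (p 0) (⨆ i : Fin n, p i.succ)
    have h2 := ih (fun i => p i.succ)
    omega

end Aux


section
variable (𝕜 A B C : Type*) [Field 𝕜] [AddCommGroup A] [Module 𝕜 A]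
  [AddCommGroup B] [Module 𝕜 B] [AddCommGroup C] [Module 𝕜 C]

/-- The minimal subspace `U_{AB}(v) ≤ A ⊗ B` of `v ∈ (A ⊗ B) ⊗ C`. -/
noncomputable def minAB (v : (A ⊗[𝕜] B) ⊗[𝕜] C) : Submodule 𝕜 (A ⊗[𝕜] B) :=
  leftMin 𝕜 (A ⊗[𝕜] B) C v

/-- The minimal subspace `U_A(v) ≤ A` of `v ∈ (A ⊗ B) ⊗ C`, obtained by contracting
`B ⊗ C` via the associativity isomorphism. -/
noncomputable def minA (v : (A ⊗[𝕜] B) ⊗[𝕜] C) : Submodule 𝕜 A :=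
  leftMin 𝕜 A (B ⊗[𝕜] C) (TensorProduct.assoc 𝕜 A B C v)

/-- The minimal subspace `U_B(v) ≤ B` of `v ∈ (A ⊗ B) ⊗ C`, obtained by contracting
the factors `A` and `C`. -/
noncomputable def minB (v : (A ⊗[𝕜] B) ⊗[𝕜] C) : Submodule 𝕜 B :=
  Submodule.span 𝕜
    {y | ∃ (ψ : A →ₗ[𝕜] 𝕜) (φ : C →ₗ[𝕜] 𝕜),
      lContract 𝕜 A B ψ (rContract 𝕜 (A ⊗[𝕜] B) C φ v) = y}

end

section Aux2
variable {𝕜 A B C : Type*} [Field 𝕜] [AddCommGroup A] [Module 𝕜 A]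
  [AddCommGroup B] [Module 𝕜 B] [AddCommGroup C] [Module 𝕜 C]

lemma contract_contract (β : B →ₗ[𝕜] 𝕜) (φ : C →ₗ[𝕜] 𝕜) (v : (A ⊗[𝕜] B) ⊗[𝕜] C) :
    rContract 𝕜 A B β (rContract 𝕜 (A ⊗[𝕜] B) C φ v)
      = rContract 𝕜 A (B ⊗[𝕜] C)
          ((TensorProduct.lid 𝕜 𝕜).toLinearMap ∘ₗ TensorProduct.map β φ)
          (TensorProduct.assoc 𝕜 A B C v) := by
  induction v using TensorProduct.induction_on with
  | zero => simp
  | tmul t z =>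
    induction t using TensorProduct.induction_on with
    | zero => simp
    | tmul x y => simp [smul_smul, mul_comm]
    | add t₁ t₂ h1 h2 => simp only [TensorProduct.add_tmul, map_add, h1, h2]
  | add v₁ v₂ h1 h2 => simp only [map_add, h1, h2]

lemma contract_assoc_tmul (χ : B ⊗[𝕜] C →ₗ[𝕜] 𝕜) (w : A ⊗[𝕜] B) (c : C) :
    rContract 𝕜 A (B ⊗[𝕜] C) χ (TensorProduct.assoc 𝕜 A B C (w ⊗ₜ c))
      = rContract 𝕜 A B (χ ∘ₗ (TensorProduct.mk 𝕜 B C).flip c) w := by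
  induction w using TensorProduct.induction_on with
  | zero => simp
  | tmul x y => simp
  | add w₁ w₂ h1 h2 => simp only [TensorProduct.add_tmul, map_add, h1, h2]

lemma lContract_mem_minB (v : (A ⊗[𝕜] B) ⊗[𝕜] C) {w : A ⊗[𝕜] B}
    (hw : w ∈ minAB 𝕜 A B C v) (ψ : A →ₗ[𝕜] 𝕜) :
    lContract 𝕜 A B ψ w ∈ minB 𝕜 A B C v := by
  induction hw using Submodule.span_induction with
  | mem x hx =>
    obtain ⟨φ, rfl⟩ := hx
    exact Submodule.subset_span ⟨ψ, φ, rfl⟩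
  | zero => rw [map_zero]; exact Submodule.zero_mem _
  | add a b ha hb h1 h2 => rw [map_add]; exact Submodule.add_mem _ h1 h2
  | smul k a ha h1 => rw [map_smul]; exact Submodule.smul_mem _ _ h1

lemma rightMin_le_minB (v : (A ⊗[𝕜] B) ⊗[𝕜] C) {w : A ⊗[𝕜] B}
    (hw : w ∈ minAB 𝕜 A B C v) :
    rightMin 𝕜 A B w ≤ minB 𝕜 A B C v := by
  rw [rightMin, Submodule.span_le]
  rintro y ⟨ψ, rfl⟩
  exact lContract_mem_minB v hw ψ

lemma leftMin_rContract_le_minA (v : (A ⊗[𝕜] B) ⊗[𝕜] C) (φ : C →ₗ[𝕜] 𝕜) :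
    leftMin 𝕜 A B (rContract 𝕜 (A ⊗[𝕜] B) C φ v) ≤ minA 𝕜 A B C v := by
  rw [leftMin, Submodule.span_le]
  rintro x ⟨β, rfl⟩
  rw [contract_contract]
  exact Submodule.subset_span ⟨_, rfl⟩

end Aux2

section
variable {𝕜 A B C : Type*} [Field 𝕜] [AddCommGroup A] [Module 𝕜 A]
  [AddCommGroup B] [Module 𝕜 B] [AddCommGroup C] [Module 𝕜 C]

/-- **Necessary compatibility conditions for tree-based ranks.**
For `v ∈ A ⊗ B ⊗ C`: (i) `dim U_{AB}(v) ≤ dim U_A(v) · dim U_B(v)`;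
(ii) `dim U_A(v) ≤ dim U_{AB}(v) · dim U_B(v)`. -/
theorem finrank_minAB_compatibility (v : (A ⊗[𝕜] B) ⊗[𝕜] C) :
    Module.finrank 𝕜 (minAB 𝕜 A B C v)
      ≤ Module.finrank 𝕜 (minA 𝕜 A B C v) * Module.finrank 𝕜 (minB 𝕜 A B C v) ∧
    Module.finrank 𝕜 (minA 𝕜 A B C v)
      ≤ Module.finrank 𝕜 (minAB 𝕜 A B C v) * Module.finrank 𝕜 (minB 𝕜 A B C v) := by
  classical
  haveI hAB : FiniteDimensional 𝕜 (minAB 𝕜 A B C v) := finiteDimensional_leftMin v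
  haveI hA : FiniteDimensional 𝕜 (minA 𝕜 A B C v) := finiteDimensional_leftMin _
  let bAB := Module.finBasis 𝕜 (minAB 𝕜 A B C v)
  -- minB is finite-dimensional
  have hminB_le : minB 𝕜 A B C v ≤ ⨆ i, rightMin 𝕜 A B ↑(bAB i) := by
    rw [minB, Submodule.span_le]
    rintro y ⟨ψ, φ, rfl⟩
    have hwmem : rContract 𝕜 (A ⊗[𝕜] B) C φ v ∈ minAB 𝕜 A B C v :=
      Submodule.subset_span ⟨φ, rfl⟩
    have hw2 : rContract 𝕜 (A ⊗[𝕜] B) C φ v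
        = ∑ i, bAB.repr ⟨_, hwmem⟩ i • (↑(bAB i) : A ⊗[𝕜] B) := by
      have h := congrArg (minAB 𝕜 A B C v).subtype
        (bAB.sum_repr (⟨_, hwmem⟩ : minAB 𝕜 A B C v))
      rw [map_sum] at h
      simp only [map_smul, Submodule.subtype_apply] at h
      exact h.symm
    rw [hw2, map_sum]
    refine Submodule.sum_mem _ fun i _ => ?_
    rw [map_smul]
    refine Submodule.smul_mem _ _ (Submodule.mem_iSup_of_mem i ?_)
    exact Submodule.subset_span ⟨ψ, rfl⟩
  haveI : ∀ i, FiniteDimensional 𝕜 (rightMin 𝕜 A B (↑(bAB i) : A ⊗[𝕜] B)) :=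
    fun i => finiteDimensional_rightMin _
  haveI hB : FiniteDimensional 𝕜 (minB 𝕜 A B C v) :=
    Submodule.finiteDimensional_of_le hminB_le
  constructor
  · -- (i)
    have hi : minAB 𝕜 A B C v
        ≤ LinearMap.range
            (TensorProduct.map (minA 𝕜 A B C v).subtype (minB 𝕜 A B C v).subtype) := by
      rw [minAB, leftMin, Submodule.span_le]
      rintro w ⟨φ, rfl⟩
      have h1 : leftMin 𝕜 A B (rContract 𝕜 (A ⊗[𝕜] B) C φ v) ≤ minA 𝕜 A B C v :=
        leftMin_rContract_le_minA v φ
      obtain ⟨w₁, hw₁⟩ :=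
        range_map_subtype_id_mono h1
          (mem_range_map_leftMin (rContract 𝕜 (A ⊗[𝕜] B) C φ v))
      have h3 : rightMin 𝕜 (minA 𝕜 A B C v) B w₁ ≤ minB 𝕜 A B C v := by
        rw [rightMin, Submodule.span_le]
        rintro y ⟨ψ', rfl⟩
        obtain ⟨ψ, hψ⟩ := LinearMap.exists_extend ψ'
        rw [← hψ, ← lContract_map_left, hw₁]
        exact Submodule.subset_span ⟨ψ, φ, rfl⟩
      obtain ⟨w₂, hw₂⟩ := range_map_id_subtype_mono h3 (mem_range_map_rightMin w₁)
      refine ⟨w₂, ?_⟩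
      have hcomp : TensorProduct.map (minA 𝕜 A B C v).subtype (minB 𝕜 A B C v).subtype
          = (TensorProduct.map (minA 𝕜 A B C v).subtype LinearMap.id).comp
              (TensorProduct.map LinearMap.id (minB 𝕜 A B C v).subtype) := by
        rw [← TensorProduct.map_comp, LinearMap.comp_id, LinearMap.id_comp]
      rw [hcomp, LinearMap.comp_apply, hw₂, hw₁]
    calc Module.finrank 𝕜 (minAB 𝕜 A B C v)
        ≤ Module.finrank 𝕜
            (LinearMap.range
              (TensorProduct.map (minA 𝕜 A B C v).subtype (minB 𝕜 A B C v).subtype)) :=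
          Submodule.finrank_mono hi
      _ ≤ Module.finrank 𝕜 ((minA 𝕜 A B C v) ⊗[𝕜] (minB 𝕜 A B C v)) :=
          LinearMap.finrank_range_le _
      _ = Module.finrank 𝕜 (minA 𝕜 A B C v) * Module.finrank 𝕜 (minB 𝕜 A B C v) :=
          Module.finrank_tensorProduct
  · -- (ii)
    obtain ⟨v', hv'⟩ := mem_range_map_leftMin v
    obtain ⟨f, hf, -⟩ := tensor_decomp bAB v'
    have hv2 : v = f.sum fun i c => (↑(bAB i) : A ⊗[𝕜] B) ⊗ₜ[𝕜] c := by
      conv_lhs => rw [← hv', hf]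
      erw [map_finsuppSum]
      refine Finsupp.sum_congr fun i _ => ?_
      exact TensorProduct.map_tmul _ _ _ _
    have hii_le : minA 𝕜 A B C v ≤ ⨆ i, leftMin 𝕜 A B ↑(bAB i) := by
      rw [minA, leftMin, Submodule.span_le]
      rintro x ⟨χ, rfl⟩
      have hkey : rContract 𝕜 A (B ⊗[𝕜] C) χ (TensorProduct.assoc 𝕜 A B C v)
          = f.sum fun i c =>
              rContract 𝕜 A B (χ ∘ₗ (TensorProduct.mk 𝕜 B C).flip c) ↑(bAB i) := by
        conv_lhs => rw [hv2]
        rw [map_finsuppSum, map_finsuppSum]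
        exact Finsupp.sum_congr fun i _ => contract_assoc_tmul χ _ _
      rw [hkey, Finsupp.sum]
      refine Submodule.sum_mem _ fun i _ => ?_
      exact Submodule.mem_iSup_of_mem i (Submodule.subset_span ⟨_, rfl⟩)
    haveI : ∀ i, FiniteDimensional 𝕜 (leftMin 𝕜 A B (↑(bAB i) : A ⊗[𝕜] B)) :=
      fun i => finiteDimensional_leftMin _
    calc Module.finrank 𝕜 (minA 𝕜 A B C v)
        ≤ Module.finrank 𝕜 ↥(⨆ i, leftMin 𝕜 A B (↑(bAB i) : A ⊗[𝕜] B)) :=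
          Submodule.finrank_mono hii_le
      _ ≤ ∑ i, Module.finrank 𝕜 (leftMin 𝕜 A B (↑(bAB i) : A ⊗[𝕜] B)) :=
          finrank_iSup_fin_le _
      _ ≤ ∑ _i : Fin (Module.finrank 𝕜 (minAB 𝕜 A B C v)),
            Module.finrank 𝕜 (minB 𝕜 A B C v) := by
          refine Finset.sum_le_sum fun i _ => ?_
          refine finrank_leftMin_le_of_mem_range
            (range_map_id_subtype_mono (rightMin_le_minB v (bAB i).2)
              (mem_range_map_rightMin (↑(bAB i) : A ⊗[𝕜] B)))
      _ = Module.finrank 𝕜 (minAB 𝕜 A B C v) * Module.finrank 𝕜 (minB 𝕜 A B C v) := by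
          simp [Finset.sum_const, mul_comm]


end
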